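/- In a directed graph with nonnegative edge weights and unique shortest paths, for any vertices s, t and any failed vertex f on the shortest path from s to t (f ≠ s, t), every shortest s–t path avoiding f diverges from the s–t shortest path at exactly one vertex Δ lying on the segment from s to f, and converges back at exactly one vertex ∇ lying on the segment from f to t, and between Δ and ∇ it is vertex-disjoint from the interior of the s–t shortest path. -/

import Mathlib

open scoped ENNReal

/-- Cost of a walk, given as a list of vertices, in a weighted digraph:
the sum of the weights of consecutive pairs.  Non-edges have weight `⊤`. -/
noncomputable def walkCost {V : Type*} (w : V → V → ℝ≥0∞) : List V → ℝ≥0∞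
  | [] => 0
  | [_] => 0
  | a :: b :: l => w a b + walkCost w (b :: l)

/-- `p` is a walk from `s` to `t`. -/
def IsWalkFromTo {V : Type*} (s t : V) (p : List V) : Prop :=
  p.head? = some s ∧ p.getLast? = some t

/-- `d(s,t ∣ avoid A)`: the length of the shortest walk from `s` to `t`
avoiding every vertex of `A` (`⊤` if none exists). -/
noncomputable def dAvoid {V : Type*} (w : V → V → ℝ≥0∞) (s t : V) (A : Set V) : ℝ≥0∞ :=
  ⨅ p ∈ {p : List V | IsWalkFromTo s t p ∧ ∀ x ∈ p, x ∉ A}, walkCost w p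

/-- All-pairs unique shortest paths. -/
def UniqueSP {V : Type*} (w : V → V → ℝ≥0∞) : Prop :=
  ∀ a b : V, dAvoid w a b ∅ ≠ ⊤ →
    ∃! p : List V, IsWalkFromTo a b p ∧ walkCost w p = dAvoid w a b ∅

/-- The set of vertices of the path `P` with positions in `[iu, iv]`:
the interval `[u, v]` on `P`. -/
def intervalSet {V : Type*} (P : List V) (iu iv : ℕ) : Set V :=
  {x | ∃ i : ℕ, iu ≤ i ∧ i ≤ iv ∧ P[i]? = some x}

section helpers
variable {V : Type*} (w : V → V → ℝ≥0∞)

@[simp] theorem walkCost_nil : walkCost w [] = 0 := by simp [walkCost]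
@[simp] theorem walkCost_single (a : V) : walkCost w [a] = 0 := by simp [walkCost]
@[simp] theorem walkCost_cons_cons (a b : V) (l : List V) :
    walkCost w (a :: b :: l) = w a b + walkCost w (b :: l) := by simp [walkCost]

theorem head?_eq_getElem_zero {α : Type*} (l : List α) : l.head? = l[0]? := by
  cases l <;> simp

theorem walkCost_append_cons (L1 : List V) (x : V) (L2 : List V) :
    walkCost w (L1 ++ x :: L2) = walkCost w (L1 ++ [x]) + walkCost w (x :: L2) := by
  induction L1 with
  | nil => simp
  | cons a L1 ih =>
    cases L1 with
    | nil =>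
      cases L2 with
      | nil => simp
      | cons b L2 => simp [walkCost]
    | cons b L1' =>
      simp only [List.cons_append, walkCost_cons_cons] at *
      rw [ih, add_assoc]

theorem dAvoid_le {s t : V} {A : Set V} {p : List V}
    (h1 : IsWalkFromTo s t p) (h2 : ∀ x ∈ p, x ∉ A) :
    dAvoid w s t A ≤ walkCost w p :=
  iInf₂_le p ⟨h1, h2⟩

theorem dAvoid_empty_le (s t : V) (A : Set V) : dAvoid w s t ∅ ≤ dAvoid w s t A := by
  refine le_iInf₂ fun p hp => dAvoid_le w hp.1 (by simp)

theorem dAvoid_exists_lt {s t : V} {A : Set V} {c : ℝ≥0∞} (h : dAvoid w s t A < c) :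
    ∃ p, IsWalkFromTo s t p ∧ (∀ x ∈ p, x ∉ A) ∧ walkCost w p < c := by
  simp only [dAvoid, iInf_lt_iff, Set.mem_setOf_eq] at h
  obtain ⟨p, ⟨h1, h2⟩, hc⟩ := h
  exact ⟨p, h1, h2, hc⟩

theorem walkCost_split {p : List V} {i : ℕ} (h : i < p.length) :
    walkCost w p = walkCost w (p.take (i+1)) + walkCost w (p.drop i) := by
  have h1 : p.take (i+1) = p.take i ++ [p[i]] := by
    rw [List.take_succ]; simp [List.getElem?_eq_getElem h]
  have h2 : p.drop i = p[i] :: p.drop (i+1) := List.drop_eq_getElem_cons h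
  calc walkCost w p = walkCost w (p.take i ++ p.drop i) := by rw [List.take_append_drop]
    _ = walkCost w (p.take i ++ p[i] :: p.drop (i+1)) := by rw [← h2]
    _ = _ := by rw [walkCost_append_cons, ← h1, ← h2]

theorem isWalk_take {s t : V} {p : List V} (hp : IsWalkFromTo s t p) {i : ℕ}
    (h : i < p.length) : IsWalkFromTo s (p[i]) (p.take (i+1)) := by
  constructor
  · obtain ⟨l, rfl⟩ := List.head?_eq_some_iff.1 hp.1
    simp
  · rw [List.getLast?_eq_getElem?]
    have hl : (p.take (i+1)).length = i + 1 := by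
      simp [List.length_take]; omega
    rw [hl]
    simp only [Nat.add_sub_cancel]
    rw [List.getElem?_take_of_lt (Nat.lt_succ_self i)]
    exact List.getElem?_eq_getElem h

theorem isWalk_drop {s t : V} {p : List V} (hp : IsWalkFromTo s t p) {i : ℕ}
    (h : i < p.length) : IsWalkFromTo (p[i]) t (p.drop i) := by
  constructor
  · rw [List.drop_eq_getElem_cons h]; rfl
  · rw [List.getLast?_eq_getElem?, List.getElem?_drop]
    have : i + ((p.drop i).length - 1) = p.length - 1 := by
      simp [List.length_drop]; omega
    rw [this, ← List.getLast?_eq_getElem?]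
    exact hp.2


theorem walk_concat {a b c : V} {p q : List V}
    (hp : IsWalkFromTo a b p) (hq : IsWalkFromTo b c q) :
    IsWalkFromTo a c (p ++ q.tail) ∧
      walkCost w (p ++ q.tail) = walkCost w p + walkCost w q := by
  obtain ⟨p', hp'⟩ := List.getLast?_eq_some_iff.1 hp.2
  obtain ⟨q', hq'⟩ := List.head?_eq_some_iff.1 hq.1
  subst hp' hq'
  have htail : (b :: q').tail = q' := rfl
  refine ⟨⟨?_, ?_⟩, ?_⟩
  · rw [htail, List.head?_append, hp.1]; rfl
  · rw [htail]
    have h1 : ((p' ++ [b]) ++ q').getLast? = q'.getLast?.or (some b) := by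
      rw [List.getLast?_append]; simp
    have h2 : (b :: q').getLast? = q'.getLast?.or (some b) := by
      rw [show b :: q' = [b] ++ q' from rfl, List.getLast?_append]; simp
    rw [h1, ← h2]; exact hq.2
  · rw [htail, List.append_assoc, show [b] ++ q' = b :: q' from rfl,
      walkCost_append_cons]

theorem subpath_opt {s t : V} {A : Set V} {p : List V}
    (hp : IsWalkFromTo s t p) (hav : ∀ x ∈ p, x ∉ A)
    (hc : walkCost w p = dAvoid w s t A) (hfin : dAvoid w s t A ≠ ⊤)
    {i : ℕ} (h : i < p.length) :
    walkCost w (p.take (i+1)) = dAvoid w s (p[i]) A ∧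
    walkCost w (p.drop i) = dAvoid w (p[i]) t A := by
  have hsplit := walkCost_split w h
  have htk : IsWalkFromTo s (p[i]) (p.take (i+1)) := isWalk_take hp h
  have hdr : IsWalkFromTo (p[i]) t (p.drop i) := isWalk_drop hp h
  have havtk : ∀ y ∈ p.take (i+1), y ∉ A := fun y hy => hav y (List.take_subset _ _ hy)
  have havdr : ∀ y ∈ p.drop i, y ∉ A := fun y hy => hav y (List.drop_subset _ _ hy)
  have hle1 : dAvoid w s (p[i]) A ≤ walkCost w (p.take (i+1)) := dAvoid_le w htk havtk
  have hle2 : dAvoid w (p[i]) t A ≤ walkCost w (p.drop i) := dAvoid_le w hdr havdr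
  have hfintot : walkCost w (p.take (i+1)) ≠ ⊤ ∧ walkCost w (p.drop i) ≠ ⊤ := by
    rw [← ENNReal.add_ne_top, ← hsplit, hc]; exact hfin
  constructor
  · by_contra hne
    have hlt : dAvoid w s (p[i]) A < walkCost w (p.take (i+1)) :=
      lt_of_le_of_ne hle1 fun h' => hne h'.symm
    obtain ⟨q, hq, hqa, hqc⟩ := dAvoid_exists_lt w hlt
    obtain ⟨hw, hcost⟩ := walk_concat w hq hdr
    have hD : dAvoid w s t A ≤ walkCost w (q ++ (p.drop i).tail) := by
      refine dAvoid_le w hw ?_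
      intro y hy
      rcases List.mem_append.1 hy with h' | h'
      · exact hqa y h'
      · exact havdr y (List.tail_subset _ h')
    rw [hcost] at hD
    have hlt2 : walkCost w q + walkCost w (p.drop i)
        < walkCost w (p.take (i+1)) + walkCost w (p.drop i) :=
      ENNReal.add_lt_add_right hfintot.2 hqc
    rw [← hsplit, hc] at hlt2
    exact absurd (lt_of_le_of_lt hD hlt2) (lt_irrefl _)
  · by_contra hne
    have hlt : dAvoid w (p[i]) t A < walkCost w (p.drop i) :=
      lt_of_le_of_ne hle2 fun h' => hne h'.symm
    obtain ⟨q, hq, hqa, hqc⟩ := dAvoid_exists_lt w hlt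
    obtain ⟨hw, hcost⟩ := walk_concat w htk hq
    have hD : dAvoid w s t A ≤ walkCost w (p.take (i+1) ++ q.tail) := by
      refine dAvoid_le w hw ?_
      intro y hy
      rcases List.mem_append.1 hy with h' | h'
      · exact havtk y h'
      · exact hqa y (List.tail_subset _ h')
    rw [hcost] at hD
    have hlt2 : walkCost w (p.take (i+1)) + walkCost w q
        < walkCost w (p.take (i+1)) + walkCost w (p.drop i) :=
      ENNReal.add_lt_add_left hfintot.1 hqc
    rw [← hsplit, hc] at hlt2
    exact absurd (lt_of_le_of_lt hD hlt2) (lt_irrefl _)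

theorem sp_unique (husp : UniqueSP w) {a b : V} (hfin : dAvoid w a b ∅ ≠ ⊤)
    {p q : List V} (hp : IsWalkFromTo a b p) (hcp : walkCost w p = dAvoid w a b ∅)
    (hq : IsWalkFromTo a b q) (hcq : walkCost w q = dAvoid w a b ∅) : p = q := by
  obtain ⟨r, _, hr⟩ := husp a b hfin
  rw [hr p ⟨hp, hcp⟩, hr q ⟨hq, hcq⟩]


theorem sp_nodup (husp : UniqueSP w) {s t : V} {P : List V}
    (hP : IsWalkFromTo s t P) (hPc : walkCost w P = dAvoid w s t ∅)
    (hfin : dAvoid w s t ∅ ≠ ⊤) : P.Nodup := by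
  rw [List.nodup_iff_getElem?_ne_getElem?]
  intro i j hij hj
  intro hEq
  have hi : i < P.length := lt_trans hij hj
  have hx : P[i] = P[j] := by
    rw [List.getElem?_eq_getElem hi, List.getElem?_eq_getElem hj] at hEq
    exact Option.some_injective _ hEq
  set P' := P.take i ++ P.drop j with hP'def
  have htk1 : P.take (i+1) = P.take i ++ [P[i]] := by
    rw [List.take_succ]; simp [List.getElem?_eq_getElem hi]
  -- cost of P'
  have hcP' : walkCost w P' = walkCost w (P.take (i+1)) + walkCost w (P.drop j) := by
    rw [hP'def, List.drop_eq_getElem_cons hj, ← hx, walkCost_append_cons, ← htk1, hx]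
  -- cost drop j ≤ cost drop i
  have hddj : (P.drop i).drop (j - i) = P.drop j := by
    rw [List.drop_drop]; congr 1; omega
  have hdj : j - i < (P.drop i).length := by simp [List.length_drop]; omega
  have hled : walkCost w (P.drop j) ≤ walkCost w (P.drop i) := by
    rw [walkCost_split w hdj, hddj]; exact le_add_self
  have hle : walkCost w P' ≤ walkCost w P := by
    rw [hcP', walkCost_split w hi]
    exact add_le_add_right hled _
  -- P' is a walk from s to t
  have hwalk' : IsWalkFromTo s t P' := by
    constructor
    · rcases Nat.eq_zero_or_pos i with h0 | h0
      · subst h0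
        have hthis : P' = P.drop j := by rw [hP'def]; simp
        rw [hthis, List.drop_eq_getElem_cons hj, ← hx]
        have h00 : P[0] = s := by
          have h1 : P[0]? = some s := by rw [← head?_eq_getElem_zero, hP.1]
          rw [List.getElem?_eq_getElem hi] at h1
          exact Option.some_injective _ h1
        rw [h00]; rfl
      · have h1 : i - 1 < P.length := by omega
        have := (isWalk_take hP h1).1
        rw [show i - 1 + 1 = i from by omega] at this
        rw [hP'def, List.head?_append, this]; rfl
    · have hdr := (isWalk_drop hP hj).2
      rw [hP'def, List.getLast?_append, hdr]; rfl
  have hav' : ∀ x ∈ P', x ∉ (∅ : Set V) := by simp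
  have hge : dAvoid w s t ∅ ≤ walkCost w P' := dAvoid_le w hwalk' hav'
  have hc' : walkCost w P' = dAvoid w s t ∅ := le_antisymm (hPc ▸ hle) hge
  have := sp_unique w husp hfin hP hPc hwalk' hc'
  have hlen : P.length = P'.length := by rw [← this]
  rw [hP'def] at hlen
  simp [List.length_take, List.length_drop] at hlen
  omega

end helpers

section mainproof
variable {V : Type*} (w : V → V → ℝ≥0∞)

theorem prefix_agree_lemma (husp : UniqueSP w) {s t f : V} {P R : List V} {k : ℕ}
    (hP : IsWalkFromTo s t P) (hPcost : walkCost w P = dAvoid w s t ∅)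
    (hfinP : dAvoid w s t ∅ ≠ ⊤)
    (hPav : ∀ x ∈ P, x ∉ (∅ : Set V))
    (hfonly : ∀ l (hl : l < P.length), P[l]'hl = f → l = k)
    (hR : IsWalkFromTo s t R) (hRcost : walkCost w R = dAvoid w s t {f})
    (hfin : dAvoid w s t {f} ≠ ⊤)
    (hRav : ∀ x ∈ R, x ∉ ({f} : Set V))
    (i j : ℕ) (x : V) (hik : i < k) (hxP : P[i]? = some x) (hxR : R[j]? = some x) :
    R.take (j+1) = P.take (j+1) ∧ j = i := by
  obtain ⟨hi, hPi⟩ := List.getElem?_eq_some_iff.1 hxP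
  obtain ⟨hj, hRj⟩ := List.getElem?_eq_some_iff.1 hxR
  have hPopt := (subpath_opt w hP hPav hPcost hfinP hi).1
  have hRopt := (subpath_opt w hR hRav hRcost hfin hj).1
  rw [hPi] at hPopt
  rw [hRj] at hRopt
  have havtk : ∀ y ∈ P.take (i+1), y ∉ ({f} : Set V) := by
    intro y hy hyf
    rw [Set.mem_singleton_iff] at hyf; subst hyf
    obtain ⟨l, hly⟩ := List.mem_iff_getElem?.1 hy
    have hl1 : l < (P.take (i+1)).length := (List.getElem?_eq_some_iff.1 hly).1
    have hl3 : l < i + 1 := by rw [List.length_take] at hl1; omega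
    rw [List.getElem?_take_of_lt hl3] at hly
    obtain ⟨hl4, hl5⟩ := List.getElem?_eq_some_iff.1 hly
    have := hfonly l hl4 hl5
    omega
  have htkP : IsWalkFromTo s x (P.take (i+1)) := hPi ▸ isWalk_take hP hi
  have htkR : IsWalkFromTo s x (R.take (j+1)) := hRj ▸ isWalk_take hR hj
  have hdeq : dAvoid w s x {f} = dAvoid w s x ∅ := by
    refine le_antisymm ?_ (dAvoid_empty_le w s x {f})
    calc dAvoid w s x {f} ≤ walkCost w (P.take (i+1)) := dAvoid_le w htkP havtk
      _ = dAvoid w s x ∅ := hPopt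
  have hfinx : dAvoid w s x ∅ ≠ ⊤ := by
    rw [← hPopt]
    have hPfin : walkCost w P ≠ ⊤ := by rw [hPcost]; exact hfinP
    rw [walkCost_split w hi] at hPfin
    exact (ENNReal.add_ne_top.1 hPfin).1
  have hRopt' : walkCost w (R.take (j+1)) = dAvoid w s x ∅ := by rw [hRopt, hdeq]
  have heq := sp_unique w husp hfinx htkR hRopt' htkP hPopt
  have hlen : j + 1 = i + 1 := by
    have := congrArg List.length heq
    simp only [List.length_take] at this
    omega
  have hji : j = i := by omega
  constructor
  · rw [heq, hji]
  · exact hji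

theorem suffix_agree_lemma (husp : UniqueSP w) {s t f : V} {P R : List V} {k : ℕ}
    (hP : IsWalkFromTo s t P) (hPcost : walkCost w P = dAvoid w s t ∅)
    (hfinP : dAvoid w s t ∅ ≠ ⊤)
    (hPav : ∀ x ∈ P, x ∉ (∅ : Set V))
    (hfonly : ∀ l (hl : l < P.length), P[l]'hl = f → l = k)
    (hR : IsWalkFromTo s t R) (hRcost : walkCost w R = dAvoid w s t {f})
    (hfin : dAvoid w s t {f} ≠ ⊤)
    (hRav : ∀ x ∈ R, x ∉ ({f} : Set V))
    (i j : ℕ) (x : V) (hik : k < i) (hxP : P[i]? = some x) (hxR : R[j]? = some x) :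
    R.drop j = P.drop i ∧ R.length - j = P.length - i := by
  obtain ⟨hi, hPi⟩ := List.getElem?_eq_some_iff.1 hxP
  obtain ⟨hj, hRj⟩ := List.getElem?_eq_some_iff.1 hxR
  have hPopt := (subpath_opt w hP hPav hPcost hfinP hi).2
  have hRopt := (subpath_opt w hR hRav hRcost hfin hj).2
  rw [hPi] at hPopt
  rw [hRj] at hRopt
  have havdr : ∀ y ∈ P.drop i, y ∉ ({f} : Set V) := by
    intro y hy hyf
    rw [Set.mem_singleton_iff] at hyf; subst hyf
    obtain ⟨l, hly⟩ := List.mem_iff_getElem?.1 hy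
    rw [List.getElem?_drop] at hly
    obtain ⟨hl4, hl5⟩ := List.getElem?_eq_some_iff.1 hly
    have := hfonly (i + l) hl4 hl5
    omega
  have hdrP : IsWalkFromTo x t (P.drop i) := hPi ▸ isWalk_drop hP hi
  have hdrR : IsWalkFromTo x t (R.drop j) := hRj ▸ isWalk_drop hR hj
  have hdeq : dAvoid w x t {f} = dAvoid w x t ∅ := by
    refine le_antisymm ?_ (dAvoid_empty_le w x t {f})
    calc dAvoid w x t {f} ≤ walkCost w (P.drop i) := dAvoid_le w hdrP havdr
      _ = dAvoid w x t ∅ := hPopt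
  have hfinx : dAvoid w x t ∅ ≠ ⊤ := by
    rw [← hPopt]
    have hPfin : walkCost w P ≠ ⊤ := by rw [hPcost]; exact hfinP
    rw [walkCost_split w hi] at hPfin
    exact (ENNReal.add_ne_top.1 hPfin).2
  have hRopt' : walkCost w (R.drop j) = dAvoid w x t ∅ := by rw [hRopt, hdeq]
  have heq := sp_unique w husp hfinx hdrR hRopt' hdrP hPopt
  have hlen : R.length - j = P.length - i := by
    have := congrArg List.length heq
    simpa only [List.length_drop] using this
  exact ⟨heq, hlen⟩

end mainproof

/-- **Unique divergence and convergence of replacement paths.**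
In a directed graph with nonnegative weights and unique shortest paths, for a failed
vertex `f` on the unique shortest `s`–`t` path `P` (with `f ≠ s, t`), every shortest
`s`–`t` path `R` avoiding `f` decomposes as `A ++ [Δ] ++ M ++ [∇] ++ B`, where
`A ++ [Δ]` is a prefix of `P` (so `R` diverges from `P` at the single vertex `Δ`,
which lies on the segment of `P` strictly before `f`), `[∇] ++ B` is a suffix of `P`
(so `R` converges back at the single vertex `∇`, lying strictly after `f`), and the
middle part `M` is vertex-disjoint from the interior of `P`. -/
theorem replacement_path_diverges_converges_once {V : Type*} (w : V → V → ℝ≥0∞)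
    (husp : UniqueSP w)
    (s t f : V) (P : List V)
    (hP : IsWalkFromTo s t P) (hPcost : walkCost w P = dAvoid w s t ∅)
    (k : ℕ) (hf : P[k]? = some f) (hfs : f ≠ s) (hft : f ≠ t)
    (hfin : dAvoid w s t {f} ≠ ⊤)
    (R : List V) (hR : IsWalkFromTo s t R) (hfR : f ∉ R)
    (hRcost : walkCost w R = dAvoid w s t {f}) :
    ∃ (A M B : List V) (Δ nab : V) (iΔ inab : ℕ),
      R = A ++ [Δ] ++ M ++ [nab] ++ B ∧
      (A ++ [Δ]) <+: P ∧
      ([nab] ++ B) <:+ P ∧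
      P[iΔ]? = some Δ ∧ iΔ < k ∧
      P[inab]? = some nab ∧ k < inab ∧
      (∀ x ∈ M, x ∈ P → x = s ∨ x = t) := by
  classical
  have hfinP : dAvoid w s t ∅ ≠ ⊤ := by
    intro h
    exact hfin (top_le_iff.1 (h ▸ dAvoid_empty_le w s t {f}))
  have hnodup : P.Nodup := sp_nodup w husp hP hPcost hfinP
  obtain ⟨hk, hfk⟩ := List.getElem?_eq_some_iff.1 hf
  have hRav : ∀ x ∈ R, x ∉ ({f} : Set V) := by
    intro x hx hxf
    rw [Set.mem_singleton_iff] at hxf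
    exact hfR (hxf ▸ hx)
  have hPav : ∀ x ∈ P, x ∉ (∅ : Set V) := fun x _ => Set.notMem_empty x
  have hRne : R ≠ [] := by
    intro h; rw [h] at hR; exact absurd hR.1 (by simp)
  have hPne : P ≠ [] := by
    intro h; rw [h] at hP; exact absurd hP.1 (by simp)
  have hRlen : 0 < R.length := List.length_pos_iff.2 hRne
  have hPlen : 0 < P.length := List.length_pos_iff.2 hPne
  have hfP : f ∈ P := List.mem_iff_getElem?.2 ⟨k, hf⟩
  have hRP : R ≠ P := fun h => hfR (h ▸ hfP)
  have hinj : ∀ i j : ℕ, i < P.length → j < P.length → P[i]? = P[j]? → i = j := by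
    intro i j hi hj hEq
    by_contra hne
    rcases Nat.lt_or_ge i j with h | h
    · exact List.nodup_iff_getElem?_ne_getElem?.1 hnodup i j h hj hEq
    · have h' : j < i := by omega
      exact List.nodup_iff_getElem?_ne_getElem?.1 hnodup j i h' hi hEq.symm
  have hfonly : ∀ l (hl : l < P.length), P[l]'hl = f → l = k := by
    intro l hl hPl
    exact hinj l k hl hk
      (by rw [List.getElem?_eq_getElem hl, List.getElem?_eq_getElem hk, hPl, hfk])
  -- longest common prefix
  have hexT : ∃ nn : ℕ, ¬(nn ≤ R.length ∧ nn ≤ P.length ∧ R.take nn = P.take nn) :=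
    ⟨R.length + 1, fun h => by omega⟩
  have hTmax := Nat.find_spec hexT
  have hTlt : ∀ m, m < Nat.find hexT →
      m ≤ R.length ∧ m ≤ P.length ∧ R.take m = P.take m :=
    fun m hm => of_not_not (Nat.find_min hexT hm)
  have hTdc : ∀ m q, m ≤ q → q ≤ R.length → q ≤ P.length → R.take q = P.take q →
      m ≤ R.length ∧ m ≤ P.length ∧ R.take m = P.take m := by
    intro m q hmq h1 h2 h3
    refine ⟨by omega, by omega, ?_⟩
    have e1 : (R.take q).take m = R.take m := by rw [List.take_take, Nat.min_eq_left hmq]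
    have e2 : (P.take q).take m = P.take m := by rw [List.take_take, Nat.min_eq_left hmq]
    rw [← e1, ← e2, h3]
  have hT1 : R.take 1 = P.take 1 := by
    obtain ⟨r', hr'⟩ := List.head?_eq_some_iff.1 hR.1
    obtain ⟨p', hp'⟩ := List.head?_eq_some_iff.1 hP.1
    rw [hr', hp']; rfl
  have hnn2 : 2 ≤ Nat.find hexT := by
    have h1 : 1 < Nat.find hexT := by
      rw [Nat.lt_find_iff]
      intro m hm
      interval_cases m
      · exact not_not_intro ⟨by omega, by omega, rfl⟩
      · exact not_not_intro ⟨by omega, by omega, hT1⟩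
    omega
  set a := Nat.find hexT - 1 with ha
  have ha1 : 1 ≤ a := by omega
  obtain ⟨haR, haP, hTa⟩ := hTlt (Nat.find hexT - 1) (by omega)
  rw [← ha] at haR haP hTa
  -- longest common suffix
  have hexS : ∃ q : ℕ, ¬(q ≤ R.length ∧ q ≤ P.length ∧
      R.drop (R.length - q) = P.drop (P.length - q)) :=
    ⟨R.length + 1, fun h => by omega⟩
  have hSmax := Nat.find_spec hexS
  have hSlt : ∀ q, q < Nat.find hexS → q ≤ R.length ∧ q ≤ P.length ∧
      R.drop (R.length - q) = P.drop (P.length - q) :=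
    fun q hq => of_not_not (Nat.find_min hexS hq)
  have hSdc : ∀ q' q, q' ≤ q → q ≤ R.length → q ≤ P.length →
      R.drop (R.length - q) = P.drop (P.length - q) →
      q' ≤ R.length ∧ q' ≤ P.length ∧
        R.drop (R.length - q') = P.drop (P.length - q') := by
    intro q' q hq h1 h2 h3
    refine ⟨by omega, by omega, ?_⟩
    have e1 : R.length - q' = (R.length - q) + (q - q') := by omega
    have e2 : P.length - q' = (P.length - q) + (q - q') := by omega
    rw [e1, e2, ← List.drop_drop, ← List.drop_drop, h3]
  have hS1 : R.drop (R.length - 1) = P.drop (P.length - 1) := by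
    obtain ⟨r', hr'⟩ := List.getLast?_eq_some_iff.1 hR.2
    obtain ⟨p', hp'⟩ := List.getLast?_eq_some_iff.1 hP.2
    rw [hr', hp']
    have e1 : (r' ++ [t]).length - 1 = r'.length := by simp
    have e2 : (p' ++ [t]).length - 1 = p'.length := by simp
    rw [e1, e2, List.drop_left, List.drop_left]
  have hmm2 : 2 ≤ Nat.find hexS := by
    have h1 : 1 < Nat.find hexS := by
      rw [Nat.lt_find_iff]
      intro m hm
      interval_cases m
      · refine not_not_intro ⟨by omega, by omega, ?_⟩
        rw [Nat.sub_zero, Nat.sub_zero, List.drop_length, List.drop_length]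
      · exact not_not_intro ⟨by omega, by omega, hS1⟩
    omega
  set m := Nat.find hexS - 1 with hmdef
  have hm1 : 1 ≤ m := by omega
  obtain ⟨hmR, hmP, hSm⟩ := hSlt (Nat.find hexS - 1) (by omega)
  rw [← hmdef] at hmR hmP hSm
  -- pointwise equalities
  have hprefEq : ∀ i, i < a → R[i]? = P[i]? := by
    intro i hia
    rw [← List.getElem?_take_of_lt hia (l := R), ← List.getElem?_take_of_lt hia (l := P), hTa]
  have hsuffEq : ∀ d, R[R.length - m + d]? = P[P.length - m + d]? := by
    intro d
    rw [← List.getElem?_drop, ← List.getElem?_drop, hSm]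
  -- non-overlap
  have hov : a + m ≤ R.length := by
    by_contra hov
    push_neg at hov
    have hppa : R.length - m < a := by omega
    have h1 : R[R.length - m]? = P[R.length - m]? := hprefEq _ hppa
    have h2 : R[R.length - m]? = P[P.length - m]? := by
      have := hsuffEq 0
      simpa using this
    rcases Nat.lt_trichotomy (R.length - m) (P.length - m) with hc | hc | hc
    · have hlt : P.length - m < P.length := by omega
      exact List.nodup_iff_getElem?_ne_getElem?.1 hnodup _ _ hc hlt (by rw [← h1, h2])
    · have hlenRP : R.length = P.length := by omega
      refine hRP (List.ext_getElem? fun i => ?_)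
      rcases Nat.lt_or_ge i a with h | h
      · exact hprefEq i h
      · rcases Nat.lt_or_ge i R.length with h' | h'
        · have e1 : i = R.length - m + (i - (R.length - m)) := by omega
          have e2 : P.length - m + (i - (R.length - m)) = i := by omega
          rw [e1, hsuffEq (i - (R.length - m)), hlenRP]
        · rw [List.getElem?_eq_none h', List.getElem?_eq_none (by omega)]
    · have hlt : R.length - m < P.length := by omega
      exact List.nodup_iff_getElem?_ne_getElem?.1 hnodup _ _ hc hlt (by rw [← h2, h1])
  -- indices and vertices
  have haP' : a - 1 < P.length := by omega
  have haR' : a - 1 < R.length := by omega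
  have himP : P.length - m < P.length := by omega
  have hRa : R[a-1]? = P[a-1]? := hprefEq (a-1) (by omega)
  have hRadel : R.take a = R.take (a-1) ++ [P[a-1]'haP'] := by
    have hRg : R[a-1]? = some (P[a-1]'haP') := by
      rw [hRa]; exact List.getElem?_eq_getElem haP'
    conv_lhs => rw [show a = (a-1)+1 by omega]
    rw [List.take_succ, hRg]
    rfl
  have hdropR : R.drop (R.length - m) = (P[P.length - m]'himP) :: P.drop (P.length - m + 1) := by
    rw [hSm, List.drop_eq_getElem_cons himP]
  refine ⟨R.take (a-1), (R.drop a).take (R.length - m - a), P.drop (P.length - m + 1),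
    P[a-1]'haP', P[P.length - m]'himP, a-1, P.length - m,
    ?_, ?_, ?_, ?_, ?_, ?_, ?_, ?_⟩
  · -- decomposition
    have step1 : R = R.take a ++ ((R.drop a).take (R.length - m - a) ++ R.drop (R.length - m)) := by
      have e : (R.drop a).drop (R.length - m - a) = R.drop (R.length - m) := by
        rw [List.drop_drop]; congr 1; omega
      rw [← e, List.take_append_drop, List.take_append_drop]
    conv_lhs => rw [step1]
    rw [hRadel, hdropR]
    simp [List.append_assoc]
  · rw [← hRadel]
    have e : R.take a = P.take a := hTa
    rw [e]
    exact List.take_prefix _ _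
  · have e : [P[P.length - m]'himP] ++ P.drop (P.length - m + 1) = P.drop (P.length - m) := by
      rw [List.singleton_append, ← List.drop_eq_getElem_cons himP]
    rw [e]
    exact List.drop_suffix _ _
  · exact List.getElem?_eq_getElem haP'
  · -- a - 1 < k
    by_contra hak
    push_neg at hak
    have hka : k < a := by omega
    have : R[k]? = some f := by rw [hprefEq k hka, hf]
    exact hfR (List.mem_iff_getElem?.2 ⟨k, this⟩)
  · exact List.getElem?_eq_getElem himP
  · -- k < P.length - m
    by_contra hkm
    push_neg at hkm
    have e : R[R.length - m + (k - (P.length - m))]? = some f := by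
      rw [hsuffEq, show P.length - m + (k - (P.length - m)) = k by omega, hf]
    exact hfR (List.mem_iff_getElem?.2 ⟨_, e⟩)
  · -- middle disjointness
    intro x hxM hxP
    exfalso
    obtain ⟨jd, hjd⟩ := List.mem_iff_getElem?.1 hxM
    have hjdlen : jd < ((R.drop a).take (R.length - m - a)).length :=
      (List.getElem?_eq_some_iff.1 hjd).1
    have hjd2 : jd < R.length - m - a := by
      rw [List.length_take, List.length_drop] at hjdlen; omega
    have hxR : R[a + jd]? = some x := by
      rw [← List.getElem?_drop, ← List.getElem?_take_of_lt hjd2 (l := R.drop a)]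
      exact hjd
    have hjlt : a + jd < R.length - m := by omega
    have hjR : a + jd < R.length := by omega
    obtain ⟨i, hi, hPi⟩ := List.mem_iff_getElem.1 hxP
    rcases Nat.lt_trichotomy i k with hik | hik | hik
    · obtain ⟨heq, hji⟩ := prefix_agree_lemma w husp hP hPcost hfinP hPav hfonly hR hRcost
        hfin hRav i (a + jd) x hik
        (by rw [List.getElem?_eq_getElem hi]; exact congrArg some hPi) hxR
      refine hTmax (hTdc (Nat.find hexT) (a + jd + 1) (by omega) (by omega) (by omega) heq)
    · subst hik
      have hxf : x = f := by rw [← hPi]; exact hfk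
      exact hfR (hxf ▸ List.mem_iff_getElem?.2 ⟨_, hxR⟩)
    · obtain ⟨heq, hlen'⟩ := suffix_agree_lemma w husp hP hPcost hfinP hPav hfonly hR hRcost
        hfin hRav i (a + jd) x hik
        (by rw [List.getElem?_eq_getElem hi]; exact congrArg some hPi) hxR
      have hLm : Nat.find hexS ≤ R.length - (a + jd) := by omega
      refine hSmax (hSdc (Nat.find hexS) (R.length - (a + jd)) hLm (by omega) (by omega) ?_)
      have e1 : R.length - (R.length - (a + jd)) = a + jd := by omega
      have e2 : P.length - (R.length - (a + jd)) = i := by omega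
      rw [e1, e2]
      exact heq
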